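/- If X_n | s_n ⇒_p X (weak convergence in probability of conditional laws) and Y_n → 0 in probability, then (X_n + Y_n) | s_n ⇒_p X. -/

import Mathlib

open MeasureTheory ProbabilityTheory Filter Topology

section Aux

variable {Ω : Type*} [mΩ : MeasurableSpace Ω]

/-- Convergence in measure to a constant plus a uniform bound gives convergence of integrals. -/
lemma aux_int_tendsto (μ : Measure Ω) [IsProbabilityMeasure μ]
    (f : ℕ → Ω → ℝ) (C c : ℝ)
    (hmeas : ∀ n, AEStronglyMeasurable (f n) μ)
    (hbd : ∀ n, ∀ᵐ ω ∂μ, ‖f n ω‖ ≤ C)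
    (hconv : TendstoInMeasure μ f atTop (fun _ => c)) :
    Tendsto (fun n => ∫ ω, f n ω ∂μ) atTop (𝓝 c) := by
  apply tendsto_of_subseq_tendsto
  intro ns hns
  have hsub : TendstoInMeasure μ (fun n => f (ns n)) atTop (fun _ => c) := by
    intro ε hε
    exact (hconv ε hε).comp hns
  obtain ⟨ms, _hms, hae⟩ := hsub.exists_seq_tendsto_ae
  refine ⟨ms, ?_⟩
  have key : Tendsto (fun n => ∫ ω, f (ns (ms n)) ω ∂μ) atTop (𝓝 (∫ _ω, c ∂μ)) := by
    apply tendsto_integral_of_dominated_convergence (fun _ => C)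
    · exact fun n => hmeas _
    · exact integrable_const C
    · exact fun n => hbd _
    · exact hae
  simpa using key

/-- Sum of two sequences converging in measure converges in measure to the sum. -/
lemma aux_tim_add {μ : Measure Ω} {f g : ℕ → Ω → ℝ} {a b : Ω → ℝ}
    (hf : TendstoInMeasure μ f atTop a) (hg : TendstoInMeasure μ g atTop b) :
    TendstoInMeasure μ (fun n => f n + g n) atTop (a + b) := by
  rw [tendstoInMeasure_iff_dist] at hf hg ⊢
  intro ε hε
  have hε2 : 0 < ε / 2 := half_pos hε
  have key : ∀ n, μ {ω | ε ≤ dist ((f n + g n) ω) ((a + b) ω)} ≤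
      μ {ω | ε / 2 ≤ dist (f n ω) (a ω)} + μ {ω | ε / 2 ≤ dist (g n ω) (b ω)} := by
    intro n
    refine le_trans (measure_mono ?_) (measure_union_le _ _)
    intro ω hω
    simp only [Set.mem_setOf_eq, Pi.add_apply] at hω
    by_contra hc
    simp only [Set.mem_union, Set.mem_setOf_eq, not_or, not_le] at hc
    obtain ⟨h1, h2⟩ := hc
    have := dist_add_add_le (f n ω) (g n ω) (a ω) (b ω)
    linarith
  have hsum : Tendsto (fun n => μ {ω | ε / 2 ≤ dist (f n ω) (a ω)} +
      μ {ω | ε / 2 ≤ dist (g n ω) (b ω)}) atTop (𝓝 0) := by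
    have := (hf (ε / 2) hε2).add (hg (ε / 2) hε2)
    simpa using this
  rw [ENNReal.tendsto_nhds_zero]
  intro ε' hε'
  filter_upwards [ENNReal.tendsto_nhds_zero.mp hsum ε' hε'] with n hn
  exact le_trans (key n) hn

variable {p : ℕ}

/-- Tightness in the limit: eventually the mass of `X n` outside a large ball is small. -/
lemma aux_tight (μ : Measure Ω) [IsProbabilityMeasure μ]
    (X : ℕ → Ω → (Fin p → ℝ)) (Xlim : Ω → (Fin p → ℝ))
    (m : ℕ → MeasurableSpace Ω) (hm : ∀ n, m n ≤ mΩ)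
    (hXmeas : ∀ n, Measurable (X n)) (hXlimmeas : Measurable Xlim)
    (hconv : ∀ h : BoundedContinuousFunction (Fin p → ℝ) ℝ,
      TendstoInMeasure μ (fun n => μ[fun ω => h (X n ω) | m n]) atTop
        (fun _ => ∫ ω, h (Xlim ω) ∂μ))
    {ε : ℝ} (hε : 0 < ε) :
    ∃ R : ℝ, 0 < R ∧ ∀ᶠ n in atTop, (μ {ω | R ≤ ‖X n ω‖}).toReal ≤ ε := by
  -- choose a radius where the limit has small tail
  set s : ℕ → Set Ω := fun k => {ω | (k : ℝ) ≤ ‖Xlim ω‖} with hs_def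
  have hsmeas : ∀ k, MeasurableSet (s k) :=
    fun k => measurableSet_le measurable_const hXlimmeas.norm
  have hanti : Antitone s := by
    intro k k' hkk' ω hω
    simp only [hs_def, Set.mem_setOf_eq] at hω ⊢
    exact le_trans (Nat.cast_le.mpr hkk') hω
  have hempty : (⋂ k, s k) = ∅ := by
    ext ω
    simp only [Set.mem_iInter, Set.mem_setOf_eq, Set.mem_empty_iff_false, iff_false, not_forall,
      not_le, hs_def]
    obtain ⟨k, hk⟩ := exists_nat_gt ‖Xlim ω‖
    exact ⟨k, hk⟩
  have htend : Tendsto (fun k => μ (s k)) atTop (𝓝 0) := by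
    have := tendsto_measure_iInter_atTop (fun k => (hsmeas k).nullMeasurableSet) hanti
      ⟨0, measure_ne_top μ _⟩
    rw [hempty, measure_empty] at this
    exact this
  have hev : ∀ᶠ k in atTop, μ (s k) < ENNReal.ofReal ε :=
    htend.eventually_lt_const (by simp [hε])
  obtain ⟨k, hk⟩ := hev.exists
  set R : ℝ := (k : ℝ)
  -- the cutoff function
  have hval : ∀ x : Fin p → ℝ, 0 ≤ min (max (‖x‖ - R) 0) 1 ∧ min (max (‖x‖ - R) 0) 1 ≤ 1 :=
    fun x => ⟨le_min (le_max_right _ _) zero_le_one, min_le_right _ _⟩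
  set g : BoundedContinuousFunction (Fin p → ℝ) ℝ :=
    ⟨⟨fun x => min (max (‖x‖ - R) 0) 1, by
        apply Continuous.min
        · exact (continuous_norm.sub continuous_const).max continuous_const
        · exact continuous_const⟩, 1, fun x y => by
      have h1 := hval x
      have h2 := hval y
      rw [Real.dist_eq, abs_sub_le_iff]
      constructor <;> simp only [ContinuousMap.coe_mk] <;> linarith [h1.1, h1.2, h2.1, h2.2]⟩
      with hg_def
  have hgapp : ∀ x, g x = min (max (‖x‖ - R) 0) 1 := fun x => rfl
  have hg0 : ∀ x, 0 ≤ g x := fun x => (hval x).1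
  have hg1 : ∀ x, g x ≤ 1 := fun x => (hval x).2
  -- measurability / integrability of g ∘ Z for measurable Z
  have hgZmeas : ∀ (Z : Ω → Fin p → ℝ), Measurable Z → Measurable (fun ω => g (Z ω)) :=
    fun Z hZ => g.continuous.measurable.comp hZ
  have hgZint : ∀ (Z : Ω → Fin p → ℝ), Measurable Z → Integrable (fun ω => g (Z ω)) μ := by
    intro Z hZ
    refine (integrable_const (1 : ℝ)).mono' (hgZmeas Z hZ).aestronglyMeasurable ?_
    refine Eventually.of_forall fun ω => ?_
    rw [Real.norm_eq_abs, abs_of_nonneg (hg0 _)]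
    exact hg1 _
  -- integrals of g ∘ X n converge to integral of g ∘ Xlim
  have hc := hconv g
  have hint_tendsto : Tendsto (fun n => ∫ ω, g (X n ω) ∂μ) atTop
      (𝓝 (∫ ω, g (Xlim ω) ∂μ)) := by
    have h1 : Tendsto (fun n => ∫ ω, (μ[fun ω => g (X n ω) | m n]) ω ∂μ) atTop
        (𝓝 (∫ ω, g (Xlim ω) ∂μ)) := by
      apply aux_int_tendsto μ _ 1 _ _ _ hc
      · intro n
        exact stronglyMeasurable_condExp.mono (hm n) |>.aestronglyMeasurable
      · intro n
        have hb : ∀ᵐ ω ∂μ, |g (X n ω)| ≤ ((1 : NNReal) : ℝ) := by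
          refine Eventually.of_forall fun ω => ?_
          rw [abs_of_nonneg (hg0 _)]
          simpa using hg1 _
        have := ae_bdd_condExp_of_ae_bdd (m := m n) (μ := μ) (R := 1) hb
        filter_upwards [this] with ω hω
        simpa [Real.norm_eq_abs] using hω
    have heq : ∀ n, ∫ ω, (μ[fun ω => g (X n ω) | m n]) ω ∂μ = ∫ ω, g (X n ω) ∂μ :=
      fun n => integral_condExp (hm n)
    simpa [heq] using h1
  -- the limit integral is at most the tail mass of Xlim
  have hlim_le : ∫ ω, g (Xlim ω) ∂μ ≤ (μ (s k)).toReal := by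
    have hind : ∀ ω, g (Xlim ω) ≤ (s k).indicator (fun _ => (1 : ℝ)) ω := by
      intro ω
      by_cases hω : ω ∈ s k
      · rw [Set.indicator_of_mem hω]
        exact (hval _).2
      · rw [Set.indicator_of_notMem hω]
        simp only [Set.mem_setOf_eq, not_le, hs_def] at hω
        rw [hgapp]
        have : max (‖Xlim ω‖ - R) 0 = 0 := max_eq_right (by simp [R]; linarith)
        rw [this]
        simp
    have := integral_mono (hgZint Xlim hXlimmeas)
      ((integrable_const (1 : ℝ)).indicator (hsmeas k)) hind
    rwa [integral_indicator_const (1 : ℝ) (hsmeas k), smul_eq_mul, mul_one] at this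
  have hlim_lt : ∫ ω, g (Xlim ω) ∂μ < ε := by
    refine lt_of_le_of_lt hlim_le ?_
    have : (μ (s k)).toReal < (ENNReal.ofReal ε).toReal := by
      apply ENNReal.toReal_strict_mono (by simp) hk
    rwa [ENNReal.toReal_ofReal hε.le] at this
  refine ⟨R + 1, by positivity, ?_⟩
  filter_upwards [hint_tendsto.eventually_lt_const hlim_lt] with n hn
  -- tail mass of X n bounded by integral of g ∘ X n
  have hAmeas : MeasurableSet {ω | R + 1 ≤ ‖X n ω‖} :=
    measurableSet_le measurable_const (hXmeas n).norm
  have hind : ∀ ω, ({ω | R + 1 ≤ ‖X n ω‖}).indicator (fun _ => (1 : ℝ)) ω ≤ g (X n ω) := by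
    intro ω
    by_cases hω : ω ∈ {ω | R + 1 ≤ ‖X n ω‖}
    · rw [Set.indicator_of_mem hω, hgapp]
      simp only [Set.mem_setOf_eq] at hω
      have h1 : (1 : ℝ) ≤ max (‖X n ω‖ - R) 0 := le_max_of_le_left (by linarith)
      exact le_min h1 le_rfl
    · rw [Set.indicator_of_notMem hω]
      exact (hval _).1
  have := integral_mono ((integrable_const (1 : ℝ)).indicator hAmeas)
    (hgZint (X n) (hXmeas n)) hind
  rw [integral_indicator_const (1 : ℝ) hAmeas, smul_eq_mul, mul_one] at this
  rw [measureReal_def] at this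
  linarith

/-- Key estimate: the `L¹` distance between `h (Xₙ + Yₙ)` and `h (Xₙ)` tends to `0`. -/
lemma aux_L1 (μ : Measure Ω) [IsProbabilityMeasure μ]
    (X Y : ℕ → Ω → (Fin p → ℝ)) (Xlim : Ω → (Fin p → ℝ))
    (m : ℕ → MeasurableSpace Ω) (hm : ∀ n, m n ≤ mΩ)
    (hXmeas : ∀ n, Measurable (X n)) (hYmeas : ∀ n, Measurable (Y n))
    (hXlimmeas : Measurable Xlim)
    (hconv : ∀ h : BoundedContinuousFunction (Fin p → ℝ) ℝ,
      TendstoInMeasure μ (fun n => μ[fun ω => h (X n ω) | m n]) atTop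
        (fun _ => ∫ ω, h (Xlim ω) ∂μ))
    (hY0 : TendstoInMeasure μ Y atTop (fun _ => (0 : Fin p → ℝ)))
    (h : BoundedContinuousFunction (Fin p → ℝ) ℝ) :
    Tendsto (fun n => ∫ ω, |h (X n ω + Y n ω) - h (X n ω)| ∂μ) atTop (𝓝 0) := by
  rw [NormedAddCommGroup.tendsto_nhds_zero]
  intro ε hε
  have hnormh : (0 : ℝ) ≤ ‖h‖ := norm_nonneg h
  set K : ℝ := 2 * ‖h‖ + 1 with hK_def
  have hK : 0 < K := by positivity
  have hε1 : 0 < ε / 4 := by positivity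
  have hε2 : 0 < ε / (4 * K) := by positivity
  -- tightness
  obtain ⟨R, hRpos, hRev⟩ := aux_tight μ X Xlim m hm hXmeas hXlimmeas hconv hε2
  -- uniform continuity on a compact ball
  have hc := (isCompact_closedBall (0 : Fin p → ℝ) (R + 1)).uniformContinuousOn_of_continuous
    h.continuous.continuousOn
  rw [Metric.uniformContinuousOn_iff] at hc
  obtain ⟨δ0, hδ0, hδ⟩ := hc (ε / 4) hε1
  set δ : ℝ := min δ0 1 with hδ_def
  have hδpos : 0 < δ := lt_min hδ0 one_pos
  have hδle1 : δ ≤ 1 := min_le_right _ _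
  have hδleδ0 : δ ≤ δ0 := min_le_left _ _
  -- Y tail eventually small
  have hYtend : Tendsto (fun n => μ {ω | δ ≤ dist (Y n ω) 0}) atTop (𝓝 0) := by
    have := tendstoInMeasure_iff_dist.mp hY0 δ hδpos
    simpa using this
  have hYev : ∀ᶠ n in atTop, (μ {ω | δ ≤ ‖Y n ω‖}).toReal ≤ ε / (4 * K) := by
    have := hYtend.eventually_lt_const (show (0 : ENNReal) < ENNReal.ofReal (ε / (4 * K)) by
      simp [hε2])
    filter_upwards [this] with n hn
    have heq : {ω | δ ≤ dist (Y n ω) 0} = {ω | δ ≤ ‖Y n ω‖} := by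
      simp [dist_zero_right]
    rw [heq] at hn
    have := (ENNReal.toReal_le_toReal (measure_ne_top μ _) ENNReal.ofReal_ne_top).mpr hn.le
    rwa [ENNReal.toReal_ofReal hε2.le] at this
  filter_upwards [hRev, hYev] with n hA hB
  set A : Set Ω := {ω | R ≤ ‖X n ω‖} with hA_def
  set B : Set Ω := {ω | δ ≤ ‖Y n ω‖} with hB_def
  have hAmeas : MeasurableSet A := measurableSet_le measurable_const (hXmeas n).norm
  have hBmeas : MeasurableSet B := measurableSet_le measurable_const (hYmeas n).norm
  -- pointwise bound
  have hpt : ∀ ω, |h (X n ω + Y n ω) - h (X n ω)| ≤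
      ε / 4 + (2 * ‖h‖) * (A.indicator (fun _ => (1 : ℝ)) ω + B.indicator (fun _ => (1 : ℝ)) ω) := by
    intro ω
    have hbd : |h (X n ω + Y n ω) - h (X n ω)| ≤ 2 * ‖h‖ := by
      have h1 : |h (X n ω + Y n ω)| ≤ ‖h‖ := by
        simpa [Real.norm_eq_abs] using h.norm_coe_le_norm (X n ω + Y n ω)
      have h2 : |h (X n ω)| ≤ ‖h‖ := by
        simpa [Real.norm_eq_abs] using h.norm_coe_le_norm (X n ω)
      calc |h (X n ω + Y n ω) - h (X n ω)| ≤ |h (X n ω + Y n ω)| + |h (X n ω)| :=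
            abs_sub _ _
        _ ≤ 2 * ‖h‖ := by linarith
    have hiA : (0 : ℝ) ≤ A.indicator (fun _ => (1 : ℝ)) ω :=
      Set.indicator_nonneg (fun _ _ => zero_le_one) ω
    have hiB : (0 : ℝ) ≤ B.indicator (fun _ => (1 : ℝ)) ω :=
      Set.indicator_nonneg (fun _ _ => zero_le_one) ω
    by_cases hωA : ω ∈ A
    · have : A.indicator (fun _ => (1 : ℝ)) ω = 1 := Set.indicator_of_mem hωA _
      rw [this]
      nlinarith
    · by_cases hωB : ω ∈ B
      · have : B.indicator (fun _ => (1 : ℝ)) ω = 1 := Set.indicator_of_mem hωB _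
        rw [this]
        nlinarith
      · -- both small: use uniform continuity
        simp only [hA_def, Set.mem_setOf_eq, not_le] at hωA
        simp only [hB_def, Set.mem_setOf_eq, not_le] at hωB
        have hx1 : X n ω ∈ Metric.closedBall (0 : Fin p → ℝ) (R + 1) := by
          rw [Metric.mem_closedBall, dist_zero_right]
          linarith
        have hx2 : X n ω + Y n ω ∈ Metric.closedBall (0 : Fin p → ℝ) (R + 1) := by
          rw [Metric.mem_closedBall, dist_zero_right]
          calc ‖X n ω + Y n ω‖ ≤ ‖X n ω‖ + ‖Y n ω‖ := norm_add_le _ _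
            _ ≤ R + 1 := by linarith
        have hdist : dist (X n ω + Y n ω) (X n ω) < δ0 := by
          rw [dist_eq_norm, add_sub_cancel_left]
          linarith
        have := hδ _ hx2 _ hx1 hdist
        rw [Real.dist_eq] at this
        nlinarith
  -- integrability
  have hφmeas : Measurable (fun ω => h (X n ω + Y n ω)) :=
    h.continuous.measurable.comp ((hXmeas n).add (hYmeas n))
  have hψmeas : Measurable (fun ω => h (X n ω)) :=
    h.continuous.measurable.comp (hXmeas n)
  have hLint : Integrable (fun ω => |h (X n ω + Y n ω) - h (X n ω)|) μ := by
    refine (integrable_const (2 * ‖h‖)).mono'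
      ((hφmeas.sub hψmeas).abs).aestronglyMeasurable ?_
    refine Eventually.of_forall fun ω => ?_
    rw [Real.norm_eq_abs, abs_abs]
    have h1 : |h (X n ω + Y n ω)| ≤ ‖h‖ := by
      simpa [Real.norm_eq_abs] using h.norm_coe_le_norm (X n ω + Y n ω)
    have h2 : |h (X n ω)| ≤ ‖h‖ := by
      simpa [Real.norm_eq_abs] using h.norm_coe_le_norm (X n ω)
    calc |h (X n ω + Y n ω) - h (X n ω)| ≤ |h (X n ω + Y n ω)| + |h (X n ω)| := abs_sub _ _
      _ ≤ 2 * ‖h‖ := by linarith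
  have hiAint : Integrable (A.indicator (fun _ => (1 : ℝ))) μ :=
    (integrable_const (1 : ℝ)).indicator hAmeas
  have hiBint : Integrable (B.indicator (fun _ => (1 : ℝ))) μ :=
    (integrable_const (1 : ℝ)).indicator hBmeas
  have hRint : Integrable (fun ω => ε / 4 + (2 * ‖h‖) *
      (A.indicator (fun _ => (1 : ℝ)) ω + B.indicator (fun _ => (1 : ℝ)) ω)) μ :=
    (integrable_const _).add (((hiAint.add hiBint)).const_mul _)
  -- integrate
  have hint := integral_mono hLint hRint hpt
  have hRval : ∫ ω, (ε / 4 + (2 * ‖h‖) *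
      (A.indicator (fun _ => (1 : ℝ)) ω + B.indicator (fun _ => (1 : ℝ)) ω)) ∂μ =
      ε / 4 + (2 * ‖h‖) * ((μ A).toReal + (μ B).toReal) := by
    have e1 : (∫ ω, (ε / 4 + (2 * ‖h‖) * (A.indicator (fun _ => (1:ℝ)) ω
          + B.indicator (fun _ => (1:ℝ)) ω)) ∂μ)
        = (∫ _ω, (ε / 4 : ℝ) ∂μ) + ∫ ω, (2 * ‖h‖) * (A.indicator (fun _ => (1:ℝ)) ω
          + B.indicator (fun _ => (1:ℝ)) ω) ∂μ :=
      integral_add (integrable_const _) ((hiAint.add hiBint).const_mul _)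
    have e2 : (∫ ω, (2 * ‖h‖) * (A.indicator (fun _ => (1:ℝ)) ω
          + B.indicator (fun _ => (1:ℝ)) ω) ∂μ)
        = (2 * ‖h‖) * ∫ ω, (A.indicator (fun _ => (1:ℝ)) ω
          + B.indicator (fun _ => (1:ℝ)) ω) ∂μ :=
      integral_const_mul _ _
    have e3 : (∫ ω, (A.indicator (fun _ => (1:ℝ)) ω + B.indicator (fun _ => (1:ℝ)) ω) ∂μ)
        = (∫ ω, A.indicator (fun _ => (1:ℝ)) ω ∂μ)
          + ∫ ω, B.indicator (fun _ => (1:ℝ)) ω ∂μ :=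
      integral_add hiAint hiBint
    have e4 : (∫ ω, A.indicator (fun _ => (1:ℝ)) ω ∂μ) = (μ A).toReal := by
      rw [integral_indicator_const (1 : ℝ) hAmeas, smul_eq_mul, mul_one, measureReal_def]
    have e5 : (∫ ω, B.indicator (fun _ => (1:ℝ)) ω ∂μ) = (μ B).toReal := by
      rw [integral_indicator_const (1 : ℝ) hBmeas, smul_eq_mul, mul_one, measureReal_def]
    rw [e1, e2, e3, e4, e5, integral_const]
    simp [measure_univ]
  rw [hRval] at hint
  have hbound : ∫ ω, |h (X n ω + Y n ω) - h (X n ω)| ∂μ ≤ ε / 4 + K * (ε / (4 * K)) +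
      K * (ε / (4 * K)) := by
    have hAB : (2 * ‖h‖) * ((μ A).toReal + (μ B).toReal) ≤
        K * (ε / (4 * K)) + K * (ε / (4 * K)) := by
      have h2K : 2 * ‖h‖ ≤ K := by rw [hK_def]; linarith
      have hμA : (0 : ℝ) ≤ (μ A).toReal := ENNReal.toReal_nonneg
      have hμB : (0 : ℝ) ≤ (μ B).toReal := ENNReal.toReal_nonneg
      nlinarith
    linarith
  have hKne : K ≠ 0 := hK.ne'
  have hKeq : K * (ε / (4 * K)) = ε / 4 := by
    field_simp
  rw [hKeq] at hbound
  have hnn : 0 ≤ ∫ ω, |h (X n ω + Y n ω) - h (X n ω)| ∂μ :=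
    integral_nonneg fun ω => abs_nonneg _
  rw [Real.norm_eq_abs, abs_of_nonneg hnn]
  linarith

end Aux

/-- If `Xₙ | sₙ ⇒_p X` (i.e. for every bounded continuous `h`, `E[h(Xₙ) | sₙ] → E[h(X)]` in
probability) and `Yₙ → 0` in probability, then `(Xₙ + Yₙ) | sₙ ⇒_p X`. -/
theorem stmt7 {Ω : Type*} [mΩ : MeasurableSpace Ω] (μ : Measure Ω) [IsProbabilityMeasure μ]
    (p : ℕ) (X Y : ℕ → Ω → (Fin p → ℝ)) (Xlim : Ω → (Fin p → ℝ))
    (m : ℕ → MeasurableSpace Ω) (hm : ∀ n, m n ≤ mΩ)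
    (hXmeas : ∀ n, Measurable (X n)) (hYmeas : ∀ n, Measurable (Y n))
    (hXlimmeas : Measurable Xlim)
    (hconv : ∀ h : BoundedContinuousFunction (Fin p → ℝ) ℝ,
      TendstoInMeasure μ (fun n => μ[fun ω => h (X n ω) | m n]) atTop
        (fun _ => ∫ ω, h (Xlim ω) ∂μ))
    (hY0 : TendstoInMeasure μ Y atTop (fun _ => (0 : Fin p → ℝ))) :
    ∀ h : BoundedContinuousFunction (Fin p → ℝ) ℝ,
      TendstoInMeasure μ (fun n => μ[fun ω => h (X n ω + Y n ω) | m n]) atTop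
        (fun _ => ∫ ω, h (Xlim ω) ∂μ) := by
  intro h
  -- notation
  set φ : ℕ → Ω → ℝ := fun n ω => h (X n ω + Y n ω) with hφ_def
  set ψ : ℕ → Ω → ℝ := fun n ω => h (X n ω) with hψ_def
  set d : ℕ → Ω → ℝ := fun n => φ n - ψ n with hd_def
  -- integrability
  have hbd : ∀ (Z : Ω → Fin p → ℝ), Measurable Z → Integrable (fun ω => h (Z ω)) μ := by
    intro Z hZ
    refine (integrable_const ‖h‖).mono'
      (h.continuous.measurable.comp hZ).aestronglyMeasurable ?_
    exact Eventually.of_forall fun ω => h.norm_coe_le_norm (Z ω)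
  have hφint : ∀ n, Integrable (φ n) μ := fun n => hbd _ ((hXmeas n).add (hYmeas n))
  have hψint : ∀ n, Integrable (ψ n) μ := fun n => hbd _ (hXmeas n)
  have hdint : ∀ n, Integrable (d n) μ := fun n => (hφint n).sub (hψint n)
  -- the correction term tends to 0 in measure
  have hD : TendstoInMeasure μ (fun n => μ[d n | m n]) atTop (fun _ => (0 : ℝ)) := by
    apply tendstoInMeasure_of_tendsto_eLpNorm (p := 1) one_ne_zero
    · exact fun n => stronglyMeasurable_condExp.mono (hm n) |>.aestronglyMeasurable
    · exact aestronglyMeasurable_const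
    · have hsub : ∀ n, (fun ω => (μ[d n | m n]) ω) - (fun _ => (0 : ℝ)) = μ[d n | m n] := by
        intro n; funext ω; simp
      have heq : ∀ n, eLpNorm ((fun ω => (μ[d n | m n]) ω) - fun _ => (0 : ℝ)) 1 μ =
          ENNReal.ofReal (∫ ω, |(μ[d n | m n]) ω| ∂μ) := by
        intro n
        rw [hsub n, eLpNorm_one_eq_lintegral_enorm,
          ← ofReal_integral_norm_eq_lintegral_enorm (integrable_condExp)]
        simp [Real.norm_eq_abs]
      have hint0 : Tendsto (fun n => ∫ ω, |(μ[d n | m n]) ω| ∂μ) atTop (𝓝 0) := by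
        have hup : Tendsto (fun n => ∫ ω, |d n ω| ∂μ) atTop (𝓝 0) := by
          have := aux_L1 μ X Y Xlim m hm hXmeas hYmeas hXlimmeas hconv hY0 h
          simpa [hd_def, hφ_def, hψ_def] using this
        refine squeeze_zero (fun n => integral_nonneg fun ω => abs_nonneg _)
          (fun n => ?_) hup
        exact integral_abs_condExp_le (d n)
      have := ENNReal.tendsto_ofReal hint0
      simp only [ENNReal.ofReal_zero] at this
      refine Tendsto.congr (fun n => (heq n).symm) this
  -- combine
  have hadd := aux_tim_add (hconv h) hD
  have hleft : ∀ n, (fun ω => (μ[fun ω => h (X n ω) | m n]) ω + (μ[d n | m n]) ω) =ᵐ[μ]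
      μ[fun ω => h (X n ω + Y n ω) | m n] := by
    intro n
    have hsum : (fun ω => h (X n ω + Y n ω)) = ψ n + d n := by
      funext ω
      simp only [hd_def, hψ_def, hφ_def, Pi.add_apply, Pi.sub_apply]
      ring
    have := condExp_add (μ := μ) (m := m n) (hψint n) (hdint n)
    rw [← hsum] at this
    filter_upwards [this] with ω hω
    simp only [Pi.add_apply] at hω ⊢
    exact hω.symm
  have hright : (fun _ : Ω => ∫ ω, h (Xlim ω) ∂μ) + (fun _ : Ω => (0 : ℝ)) =ᵐ[μ]
      fun _ : Ω => ∫ ω, h (Xlim ω) ∂μ := by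
    refine Eventually.of_forall fun ω => ?_
    simp
  exact TendstoInMeasure.congr hleft hright hadd
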